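/- The q^{-2}-exponential expansion identity: exp_{q^{-2}}((q-q^{-1}) e_1⊗f_2)(v^{(1)}_n ⊗ v^{(2)}_m) = Σ_{k=0}^{n} C(n,k)_{q^{-2}} v^{(1)}_{n-k} ⊗ v^{(2)}_{m+k}, where C(n,k)_{q^{-2}} is the Gaussian binomial coefficient with base q^{-2}. -/

import Mathlib

namespace stmt14

/-- The model of W₁ ⊗ W₂: basis vectors `single (n,m) 1 = v⁽¹⁾ₙ ⊗ v⁽²⁾ₘ`. -/
abbrev V : Type := (ℕ × ℕ) →₀ ℂ

noncomputable def op (g : ℕ × ℕ → V) : V →ₗ[ℂ] V :=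
  Finsupp.lsum ℂ fun p => LinearMap.toSpanSingleton ℂ V (g p)

/-- `e₁ ⊗ 1`: `e₁ v⁽¹⁾ₙ = [n]_q q^{-n+1}/(q-q⁻¹) v⁽¹⁾_{n-1}`. -/
noncomputable def e1 (q : ℂ) : V →ₗ[ℂ] V :=
  op fun p => Finsupp.single (p.1 - 1, p.2)
    (if p.1 = 0 then 0 else
      ((q ^ p.1 - q⁻¹ ^ p.1) / (q - q⁻¹)) * (q⁻¹ ^ p.1 * q) / (q - q⁻¹))

/-- `1 ⊗ f₂`: `f₂ v⁽²⁾ₘ = v⁽²⁾_{m+1}`. -/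
noncomputable def f2 : V →ₗ[ℂ] V :=
  op fun p => Finsupp.single (p.1, p.2 + 1) 1

/-- `(k)_p = (1-p^k)/(1-p)`. -/
noncomputable def pnum (p : ℂ) (k : ℕ) : ℂ := (1 - p ^ k) / (1 - p)

/-- `(k)_p!`. -/
noncomputable def pfact (p : ℂ) (k : ℕ) : ℂ := ∏ i ∈ Finset.range k, pnum p (i + 1)

/-- Gaussian binomial `C(n,k)_p`. -/
noncomputable def pbinom (p : ℂ) (n k : ℕ) : ℂ := pfact p n / (pfact p k * pfact p (n - k))

/-- `O = exp_{q⁻²}((q-q⁻¹)·e₁⊗f₂)`: since `(e₁⊗f₂)^k` kills `v⁽¹⁾ₙ ⊗ v⁽²⁾ₘ` for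
`k > n`, the series truncates on each basis vector. -/
noncomputable def Oop (q : ℂ) : V →ₗ[ℂ] V :=
  op fun p => ∑ k ∈ Finset.range (p.1 + 1),
    (pfact (q⁻¹ ^ 2) k)⁻¹ • ((((q - q⁻¹) • (e1 q ∘ₗ f2)) ^ k) (Finsupp.single p 1))

end stmt14

namespace stmt14

lemma op_single (g : ℕ × ℕ → V) (p : ℕ × ℕ) (c : ℂ) :
    op g (Finsupp.single p c) = c • g p := by
  simp [op]

lemma hd_aux (q : ℂ) (hq : q ≠ 0) (hs : q ^ 2 ≠ 1) : q - q⁻¹ ≠ 0 := by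
  intro h
  apply hs
  have hqq : q = q⁻¹ := sub_eq_zero.mp h
  calc q ^ 2 = q * q := sq q
  _ = q * q⁻¹ := by rw [← hqq]
  _ = 1 := mul_inv_cancel₀ hq

lemma hd2_aux (q : ℂ) (hs : q ^ 2 ≠ 1) : (1 : ℂ) - q⁻¹ ^ 2 ≠ 0 := by
  intro h
  apply hs
  have h2 : (q ^ 2)⁻¹ = 1 := by rw [← inv_pow]; linear_combination -h
  simpa [inv_eq_one] using h2

lemma step (q : ℂ) (hq : q ≠ 0) (hs : q ^ 2 ≠ 1) (n m : ℕ) :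
    ((q - q⁻¹) • (e1 q ∘ₗ f2)) (Finsupp.single (n, m) 1)
      = pnum (q⁻¹ ^ 2) n • Finsupp.single (n - 1, m + 1) 1 := by
  have hd := hd_aux q hq hs
  have hd2 := hd2_aux q hs
  rw [LinearMap.smul_apply, LinearMap.comp_apply, f2, op_single, one_smul, e1, op_single, one_smul]
  simp only [Finsupp.smul_single, smul_eq_mul, mul_one]
  congr 1
  rcases Nat.eq_zero_or_pos n with h0 | h0
  · simp [h0, pnum]
  · rw [if_neg h0.ne', pnum, div_mul_eq_mul_div, div_div, ← mul_div_assoc,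
      mul_div_mul_left _ _ hd, div_eq_div_iff hd hd2]
    field_simp
    ring_nf
    rw [← mul_pow, mul_inv_cancel₀ hq, one_pow]

lemma pow_apply (q : ℂ) (hq : q ≠ 0) (hs : q ^ 2 ≠ 1) (n m k : ℕ) :
    (((q - q⁻¹) • (e1 q ∘ₗ f2)) ^ k) (Finsupp.single (n, m) 1)
      = (∏ i ∈ Finset.range k, pnum (q⁻¹ ^ 2) (n - i)) • Finsupp.single (n - k, m + k) 1 := by
  induction k generalizing n m with
  | zero => simp
  | succ k ih =>
    rw [pow_succ, Module.End.mul_apply, step q hq hs, map_smul, ih, smul_smul]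
    have hp : pnum (q⁻¹ ^ 2) n * ∏ i ∈ Finset.range k, pnum (q⁻¹ ^ 2) (n - 1 - i)
        = ∏ i ∈ Finset.range (k + 1), pnum (q⁻¹ ^ 2) (n - i) := by
      rw [Finset.prod_range_succ', Nat.sub_zero, mul_comm]
      congr 1
      exact Finset.prod_congr rfl fun i _ => by congr 1; omega
    rw [hp, show n - 1 - k = n - (k + 1) from by omega,
      show m + 1 + k = m + (k + 1) from by omega]

lemma pnum_ne_zero (q : ℂ) (hq : q ≠ 0) (hroot : ∀ n : ℕ, n ≠ 0 → q ^ n ≠ 1) (j : ℕ)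
    (hj : j ≠ 0) : pnum (q⁻¹ ^ 2) j ≠ 0 := by
  have hs := hroot 2 (by norm_num)
  have hd2 := hd2_aux q hs
  apply div_ne_zero _ hd2
  intro h
  have h2 : (q⁻¹ ^ 2) ^ j = 1 := by linear_combination -h
  rw [← pow_mul, inv_pow, inv_eq_one] at h2
  exact hroot (2 * j) (by omega) h2

lemma pfact_ne_zero (q : ℂ) (hq : q ≠ 0) (hroot : ∀ n : ℕ, n ≠ 0 → q ^ n ≠ 1) (k : ℕ) :
    pfact (q⁻¹ ^ 2) k ≠ 0 :=
  Finset.prod_ne_zero_iff.mpr fun i _ => pnum_ne_zero q hq hroot (i + 1) (by omega)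

lemma prod_eq (q : ℂ) (n k : ℕ) (hk : k ≤ n) :
    pfact (q⁻¹ ^ 2) (n - k) * ∏ i ∈ Finset.range k, pnum (q⁻¹ ^ 2) (n - i)
      = pfact (q⁻¹ ^ 2) n := by
  induction k with
  | zero => simp
  | succ k ih =>
    rw [Finset.prod_range_succ, ← mul_assoc, mul_right_comm]
    have h1 : n - k = (n - (k + 1)) + 1 := by omega
    have key : pfact (q⁻¹ ^ 2) (n - (k + 1)) * pnum (q⁻¹ ^ 2) (n - k)
        = pfact (q⁻¹ ^ 2) (n - k) := by
      rw [h1]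
      exact (Finset.prod_range_succ _ _).symm
    rw [key]
    exact ih (by omega)

end stmt14

/-- the q⁻²-exponential expansion identity
`exp_{q⁻²}((q-q⁻¹) e₁⊗f₂)(v⁽¹⁾ₙ ⊗ v⁽²⁾ₘ) = Σ_{k=0}^{n} C(n,k)_{q⁻²} v⁽¹⁾_{n-k} ⊗ v⁽²⁾_{m+k}`. -/
theorem stmt14 (q : ℂ) (hq : q ≠ 0) (hroot : ∀ n : ℕ, n ≠ 0 → q ^ n ≠ 1) :
    ∀ n m : ℕ,
      stmt14.Oop q (Finsupp.single (n, m) 1)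
        = ∑ k ∈ Finset.range (n + 1),
            stmt14.pbinom (q⁻¹ ^ 2) n k • Finsupp.single (n - k, m + k) (1 : ℂ) := by
  intro n m
  have hs := hroot 2 (by norm_num)
  rw [stmt14.Oop, stmt14.op_single, one_smul]
  refine Finset.sum_congr rfl fun k hk => ?_
  rw [Finset.mem_range] at hk
  have hkn : k ≤ n := by omega
  rw [stmt14.pow_apply q hq hs, smul_smul]
  congr 1
  rw [stmt14.pbinom, ← stmt14.prod_eq q n k hkn]
  have h1 := stmt14.pfact_ne_zero q hq hroot k
  have h2 := stmt14.pfact_ne_zero q hq hroot (n - k)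
  rw [mul_comm (stmt14.pfact (q⁻¹ ^ 2) k), mul_div_mul_left _ _ h2, inv_mul_eq_div]
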